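/- (Lemma 4.4, second claim.) Let s = s₁ + i s₂ with s₁ > 0, s₂ ∈ ℝ, and define the complex distance ρ_s(x̃, y) = s·|x̃ − y|. Then for every x ∈ Γ₂ and y ∈ Γ₁ one has Re[ρ_s(x̃, y)] = s₁·|x̃ − y| ≥ σ₀ d/(m+1). -/

import Mathlib

open intervalIntegral MeasureTheory Set

lemma pml_integral_pos (c d σ₀ : ℝ) (m : ℕ) (hc : 0 < c) (hd : 0 < d)
    (hσ₀ : 0 < σ₀) (hm : 1 ≤ m) (σ : ℝ → ℝ)
    (h1 : ∀ τ : ℝ, |τ| ≤ c → σ τ = 0)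
    (h2 : ∀ τ : ℝ, c < |τ| → |τ| ≤ c + d → σ τ = σ₀ * ((|τ| - c) / d) ^ m) :
    ∫ τ in (0:ℝ)..(c + d), σ τ = σ₀ * d / (m + 1) := by
  have hcd : (0:ℝ) ≤ c := hc.le
  have hEq1 : EqOn σ (fun _ => (0:ℝ)) (uIcc 0 c) := by
    intro τ hτ
    rw [uIcc_of_le hc.le] at hτ
    exact h1 τ (by rw [abs_of_nonneg hτ.1]; exact hτ.2)
  set g : ℝ → ℝ := fun τ => σ₀ * ((τ - c) / d) ^ m with hg
  have hEq2 : EqOn σ g (uIcc c (c + d)) := by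
    intro τ hτ
    rw [uIcc_of_le (by linarith)] at hτ
    have hτ0 : 0 < τ := lt_of_lt_of_le hc hτ.1
    have habs : |τ| = τ := abs_of_pos hτ0
    rcases eq_or_lt_of_le hτ.1 with h | h
    · rw [h1 τ (by rw [habs, ← h]), hg]
      simp only [← h, sub_self, zero_div]
      rw [zero_pow (by omega), mul_zero]
    · rw [h2 τ (by rw [habs]; exact h) (by rw [habs]; exact hτ.2), habs]
  have hgc : Continuous g := by fun_prop
  have i1 : IntervalIntegrable σ volume 0 c := by
    refine (_root_.intervalIntegrable_const (μ := volume) (a := 0) (b := c) (c := (0:ℝ))).congr ?_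
    exact
      fun τ hτ => (hEq1 (uIoc_subset_uIcc hτ)).symm
  have i2 : IntervalIntegrable σ volume c (c + d) := by
    refine (hgc.intervalIntegrable c (c + d)).congr ?_
    exact
      fun τ hτ => (hEq2 (uIoc_subset_uIcc hτ)).symm
  rw [← integral_add_adjacent_intervals i1 i2, integral_congr hEq1,
    integral_congr hEq2]
  simp only [intervalIntegral.integral_const, smul_zero, zero_add]
  have : ∫ τ in c..(c + d), g τ = σ₀ * ((1/d) ^ m * ∫ τ in c..(c+d), (τ - c) ^ m) := by
    rw [← intervalIntegral.integral_const_mul, ← intervalIntegral.integral_const_mul]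
    congr 1; ext τ; rw [hg]; rw [div_pow]; field_simp
    rw [div_pow, one_pow, one_mul, div_mul_cancel₀ _ (pow_ne_zero _ hd.ne')]
  rw [this, integral_comp_sub_right (fun u => u ^ m) c]
  simp only [sub_self, add_sub_cancel_left, integral_pow, zero_pow (by omega : m + 1 ≠ 0),
    sub_zero]
  field_simp
  rw [div_pow, one_pow, pow_succ, ← mul_assoc, one_div_mul_cancel (pow_ne_zero _ hd.ne'), one_mul]
lemma pml_integral_signed (c d σ₀ : ℝ) (m : ℕ) (hc : 0 < c) (hd : 0 < d)
    (hσ₀ : 0 < σ₀) (hm : 1 ≤ m) (σ : ℝ → ℝ)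
    (h1 : ∀ τ : ℝ, |τ| ≤ c → σ τ = 0)
    (h2 : ∀ τ : ℝ, c < |τ| → |τ| ≤ c + d → σ τ = σ₀ * ((|τ| - c) / d) ^ m) :
    ∫ τ in (0:ℝ)..(-(c + d)), σ τ = -(σ₀ * d / (m + 1)) := by
  have key : ∫ τ in (0:ℝ)..(c + d), σ (-τ) = σ₀ * d / (m + 1) :=
    pml_integral_pos c d σ₀ m hc hd hσ₀ hm (fun τ => σ (-τ))
      (fun τ hτ => h1 (-τ) (by rwa [abs_neg]))
      (fun τ hτ1 hτ2 => by
        show σ (-τ) = _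
        rw [h2 (-τ) (by rwa [abs_neg]) (by rwa [abs_neg]), abs_neg])
  have e1 : ∫ τ in (0:ℝ)..(c + d), σ (-τ) = ∫ τ in (-(c+d))..(0:ℝ), σ τ := by
    simpa using intervalIntegral.integral_comp_neg (a := (0:ℝ)) (b := c + d) (f := σ)
  have e2 : ∫ τ in (-(c+d))..(0:ℝ), σ τ = -∫ τ in (0:ℝ)..(-(c+d)), σ τ :=
    intervalIntegral.integral_symm 0 (-(c+d))
  rw [e1, e2] at key
  linarith

/-- Lemma 4.4, second claim: for x ∈ Γ₂ and y ∈ Γ₁ the complex distance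
ρ_s(x̃, y) = s·|x̃ - y| satisfies Re[ρ_s(x̃, y)] = s₁·|x̃ - y| ≥ σ₀ d/(m+1). -/
theorem complex_distance_real_part (L : Fin 3 → ℝ) (d σ₀ s₁ s₂ : ℝ) (m : ℕ)
    (hL : ∀ j, 0 < L j) (hd : 0 < d) (hσ₀ : 0 < σ₀) (hm : 1 ≤ m) (hs₁ : 0 < s₁)
    (σ : Fin 3 → ℝ → ℝ)
    (h1 : ∀ j, ∀ τ : ℝ, |τ| ≤ L j / 2 → σ j τ = 0)
    (h2 : ∀ j, ∀ τ : ℝ, L j / 2 < |τ| → |τ| ≤ L j / 2 + d →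
      σ j τ = σ₀ * ((|τ| - L j / 2) / d) ^ m)
    (h3 : ∀ j, ∀ τ : ℝ, L j / 2 + d < |τ| → σ j τ = σ₀)
    (s : ℂ) (hs : s = (s₁ : ℂ) + Complex.I * s₂)
    (x y : EuclideanSpace ℝ (Fin 3))
    (hxΓ₂ : (∀ j, |x j| ≤ L j / 2 + d) ∧ ∃ j, |x j| = L j / 2 + d)
    (hyΓ₁ : (∀ j, |y j| ≤ L j / 2) ∧ ∃ j, |y j| = L j / 2)
    (xt : EuclideanSpace ℝ (Fin 3))
    (hxt : ∀ j, xt j = x j + s₁⁻¹ * ∫ τ in (0:ℝ)..(x j), σ j τ) :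
    (s * ‖xt - y‖).re = s₁ * ‖xt - y‖ ∧ σ₀ * d / (m + 1) ≤ s₁ * ‖xt - y‖ := by
  constructor
  · rw [hs]
    simp [add_mul, Complex.mul_re, Complex.mul_im]
  · obtain ⟨hx2, j, hxj⟩ := hxΓ₂
    obtain ⟨hy1, -⟩ := hyΓ₁
    set K := σ₀ * d / (m + 1) with hK
    have hKpos : 0 < K := by positivity
    have hc : 0 < L j / 2 := half_pos (hL j)
    have hyj : |y j| ≤ L j / 2 := hy1 j
    -- lower bound on |xt j - y j|
    have hxyj : s₁⁻¹ * K ≤ |xt j - y j| := by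
      rcases (abs_eq (by positivity)).mp hxj with h | h
      · have hint : ∫ τ in (0:ℝ)..(x j), σ j τ = K := by
          rw [h]; exact pml_integral_pos _ d σ₀ m hc hd hσ₀ hm (σ j) (h1 j) (h2 j)
        have hxtj : xt j = L j / 2 + d + s₁⁻¹ * K := by rw [hxt j, hint, h]
        have hy' : y j ≤ L j / 2 := (abs_le.mp hyj).2
        have hδ : 0 < s₁⁻¹ * K := by positivity
        refine le_abs.mpr (Or.inl ?_)
        rw [hxtj]; linarith
      · have hint : ∫ τ in (0:ℝ)..(x j), σ j τ = -K := by
          rw [h]; exact pml_integral_signed _ d σ₀ m hc hd hσ₀ hm (σ j) (h1 j) (h2 j)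
        have hxtj : xt j = -(L j / 2 + d) + s₁⁻¹ * (-K) := by rw [hxt j, hint, h]
        have hy' : -(L j / 2) ≤ y j := (abs_le.mp hyj).1
        have hδ : 0 < s₁⁻¹ * K := by positivity
        refine le_abs.mpr (Or.inr ?_)
        rw [hxtj]; ring_nf; linarith
    -- ‖xt - y‖ ≥ |xt j - y j|
    have hnorm : |xt j - y j| ≤ ‖xt - y‖ := by
      rw [EuclideanSpace.norm_eq]
      have e : |xt j - y j| = Real.sqrt (‖(xt - y) j‖ ^ 2) := by
        rw [Real.sqrt_sq_eq_abs]
        simp [PiLp.sub_apply]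
      rw [e]
      exact Real.sqrt_le_sqrt (Finset.single_le_sum
        (f := fun i => ‖(xt - y) i‖ ^ 2) (fun i _ => sq_nonneg _) (Finset.mem_univ j))
    have : s₁⁻¹ * K ≤ ‖xt - y‖ := le_trans hxyj hnorm
    calc K = s₁ * (s₁⁻¹ * K) := by field_simp
      _ ≤ s₁ * ‖xt - y‖ := by
        exact mul_le_mul_of_nonneg_left this hs₁.le
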